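/- Let q ∈ ℂ with 0 < |q| < 1 and let y ∈ ℂ be nonzero with y ≠ q^m for every integer m. Then the symmetric limit lim_{k→∞} Σ_{i=−k}^{k} 1/((1 − y·qⁱ)·(1 − q^{−i−1}·y⁻¹)) exists and equals q/(1 − q). -/

import Mathlib

open Filter

/-- The symmetric limit `lim_{k→∞} ∑_{i=-k}^{k} 1/((1 - y qⁱ)(1 - q^{-i-1} y⁻¹))`
exists and equals `q/(1-q)`, for `0 < |q| < 1` and `y ≠ 0` with `y ≠ qᵐ` for all
integers `m`. -/
theorem symmetric_limit_s0 (q y : ℂ) (hq0 : 0 < ‖q‖) (hq1 : ‖q‖ < 1)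
    (hy0 : y ≠ 0) (hy : ∀ m : ℤ, y ≠ q ^ m) :
    Tendsto (fun k : ℕ => ∑ i ∈ Finset.Icc (-(k : ℤ)) (k : ℤ),
        1 / ((1 - y * q ^ i) * (1 - q ^ (-i - 1) * y⁻¹)))
      atTop (nhds (q / (1 - q))) := by
  have hqne : q ≠ 0 := by
    intro h; rw [h] at hq0; simp at hq0
  have hq1ne : (1 : ℂ) - q ≠ 0 := by
    intro h
    have : q = 1 := by linear_combination -h
    rw [this] at hq1; simp at hq1
  have hA : ∀ i : ℤ, (1 : ℂ) - y * q ^ i ≠ 0 := by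
    intro i h
    apply hy (-i)
    have h1 : y * q ^ i = 1 := by linear_combination -h
    have hqi : (q : ℂ) ^ i ≠ 0 := zpow_ne_zero _ hqne
    rw [zpow_neg]
    field_simp
    linear_combination h1
  -- per-term identity
  have key : ∀ i : ℤ, 1 / ((1 - y * q ^ i) * (1 - q ^ (-i - 1) * y⁻¹))
      = (q / (1 - q)) * ((1 - y * q ^ (i + 1))⁻¹ - (1 - y * q ^ i)⁻¹) := by
    intro i
    have h1 := hA i
    have h2 := hA (i + 1)
    have ha : (q : ℂ) ^ i ≠ 0 := zpow_ne_zero _ hqne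
    have e1 : (q : ℂ) ^ (i + 1) = q ^ i * q := by
      rw [zpow_add_one₀ hqne]
    have e2 : (q : ℂ) ^ (-i - 1) = (q ^ i * q)⁻¹ := by
      rw [← e1, ← zpow_neg]; ring_nf
    rw [e1] at h2
    have h3 : (1 : ℂ) - (q ^ i * q)⁻¹ * y⁻¹ ≠ 0 := by
      intro h
      apply h2
      have hne : (q : ℂ) ^ i * q ≠ 0 := mul_ne_zero ha hqne
      field_simp at h
      linear_combination -h
    have hne : (q : ℂ) ^ i * q ≠ 0 := mul_ne_zero ha hqne
    have h4 : (1 : ℂ) - (q ^ i * q)⁻¹ * y⁻¹ = (q ^ i * q * y - 1) / (q ^ i * q * y) := by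
      field_simp
    have h2' : (q : ℂ) ^ i * q * y - 1 ≠ 0 := by
      intro h; apply h2; linear_combination -h
    have h5 : (1 : ℂ) - y * q ^ i * q ≠ 0 := by
      intro h; apply h2; linear_combination h
    have h6 : (-1 : ℂ) + y * q ^ i * q ≠ 0 := by
      intro h; apply h2; linear_combination -h
    simp only [e1, e2, h4]
    field_simp
    ring_nf
    field_simp
    ring
  -- telescoping sum
  have sumeq : ∀ k : ℕ, (∑ i ∈ Finset.Icc (-(k : ℤ)) (k : ℤ),
      1 / ((1 - y * q ^ i) * (1 - q ^ (-i - 1) * y⁻¹)))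
      = (q / (1 - q)) * ((1 - y * q ^ ((k : ℤ) + 1))⁻¹ - (1 - y * q ^ (-(k : ℤ)))⁻¹) := by
    intro k
    have hmap : Finset.Icc (-(k : ℤ)) (k : ℤ)
        = (Finset.range (2 * k + 1)).map
          ⟨fun j : ℕ => (j : ℤ) - k, (show Function.Injective (fun j : ℕ => (j : ℤ) - k) from fun a b h => by
            simp only at h; omega)⟩ := by
      ext x
      simp only [Finset.mem_Icc, Finset.mem_map, Finset.mem_range,
        Function.Embedding.coeFn_mk]
      constructor
      · rintro ⟨h1, h2⟩
        exact ⟨(x + k).toNat, by omega, by omega⟩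
      · rintro ⟨j, hj, rfl⟩
        omega
    rw [hmap, Finset.sum_map]
    simp only [Function.Embedding.coeFn_mk]
    have step : ∀ j : ℕ, 1 / ((1 - y * q ^ ((j : ℤ) - k)) * (1 - q ^ (-((j : ℤ) - k) - 1) * y⁻¹))
        = (q / (1 - q)) * ((fun n : ℕ => (1 - y * q ^ ((n : ℤ) - k))⁻¹) (j + 1)
            - (fun n : ℕ => (1 - y * q ^ ((n : ℤ) - k))⁻¹) j) := by
      intro j
      rw [key ((j : ℤ) - k)]
      simp only
      congr 3
      push_cast
      ring_nf
    rw [Finset.sum_congr rfl (fun j _ => step j), ← Finset.mul_sum,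
      Finset.sum_range_sub (fun n : ℕ => (1 - y * q ^ ((n : ℤ) - k))⁻¹)]
    congr 3
    · push_cast; ring_nf
    · push_cast; ring_nf
  -- limits
  have hpow : Tendsto (fun k : ℕ => q ^ k) atTop (nhds 0) :=
    tendsto_pow_atTop_nhds_zero_of_norm_lt_one (by simpa using hq1)
  have e1 : Tendsto (fun k : ℕ => (1 - y * q ^ ((k : ℤ) + 1))⁻¹) atTop (nhds 1) := by
    have heq : ∀ k : ℕ, (1 - y * q ^ ((k : ℤ) + 1))⁻¹ = (1 - y * (q * q ^ k))⁻¹ := by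
      intro k
      have : (q : ℂ) ^ ((k : ℤ) + 1) = q * q ^ k := by
        rw [zpow_add_one₀ hqne, zpow_natCast]; ring
      rw [this]
    simp only [heq]
    have hlim : Tendsto (fun k : ℕ => (1 : ℂ) - y * (q * q ^ k)) atTop (nhds 1) := by
      have := (hpow.const_mul q).const_mul y
      have h2 := (tendsto_const_nhds (x := (1 : ℂ)) (f := atTop (α := ℕ))).sub this
      simpa using h2
    simpa using hlim.inv₀ (by norm_num)
  have e2 : Tendsto (fun k : ℕ => (1 - y * q ^ (-(k : ℤ)))⁻¹) atTop (nhds 0) := by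
    have heq : ∀ k : ℕ, (1 - y * q ^ (-(k : ℤ)))⁻¹ = q ^ k / (q ^ k - y) := by
      intro k
      have hk : (q : ℂ) ^ (-(k : ℤ)) = (q ^ k)⁻¹ := by
        rw [zpow_neg, zpow_natCast]
      rw [hk]
      have hqk : (q : ℂ) ^ k ≠ 0 := pow_ne_zero _ hqne
      have hden : (q : ℂ) ^ k - y ≠ 0 := by
        intro h
        apply hy k
        rw [zpow_natCast]
        linear_combination -h
      rw [eq_div_iff hden]
      field_simp
      try ring
    simp only [heq]
    have hden : Tendsto (fun k : ℕ => q ^ k - y) atTop (nhds (-y)) := by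
      have := hpow.sub (tendsto_const_nhds (x := y))
      simpa using this
    have := hpow.div hden (by simpa using hy0)
    simpa [Pi.div_def] using this
  have final := (e1.sub e2).const_mul (q / (1 - q))
  rw [sub_zero, mul_one] at final
  exact Tendsto.congr (fun k => (sumeq k).symm) final
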